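/- Let K be a finite set, k ∈ K, and B = (b_{ij}) a skew-symmetric integer K×K matrix. Then the tropical transformations φ^R_{μ_k(B),k} and φ^R_{B,k} are inverse to each other: φ^R_{μ_k(B),k} ∘ φ^R_{B,k} = id_{ℤ^K} and φ^R_{B,k} ∘ φ^R_{μ_k(B),k} = id_{ℤ^K}. In particular φ^R_{B,k} is a bijection of ℤ^K. -/

import Mathlib

/-- Mutation of a skew-symmetric integer `K×K` matrix `B` in direction `k`:
`μ_k(B)_{ij} = -b_{ij}` if `i = k` or `j = k`, and
`μ_k(B)_{ij} = b_{ij} + (-1)^{δ(b_{ik}<0)} max(b_{ik} b_{kj}, 0)` otherwise. -/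
def mutate {K : Type*} [DecidableEq K] (B : Matrix K K ℤ) (k : K) : Matrix K K ℤ :=
  fun i j =>
    if i = k ∨ j = k then -B i j
    else B i j + (if B i k < 0 then -1 else 1) * max (B i k * B k j) 0

/-- The tropical transformation `φ^R_{B,k} : ℤ^K → ℤ^K`:
`g'_k = -g_k`, and for `i ≠ k`, `g'_i = g_i + [b_{ki}]₊ g_k` if `g_k ≥ 0`,
`g'_i = g_i + [b_{ik}]₊ g_k` if `g_k ≤ 0`. -/
def phiR {K : Type*} [DecidableEq K] (B : Matrix K K ℤ) (k : K) (g : K → ℤ) : K → ℤ :=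
  fun i =>
    if i = k then -g k
    else if 0 ≤ g k then g i + max (B k i) 0 * g k
    else g i + max (B i k) 0 * g k

/-- For a skew-symmetric integer `K×K` matrix `B` and `k ∈ K`, the tropical transformations
`φ^R_{μ_k(B),k}` and `φ^R_{B,k}` are inverse to each other; in particular `φ^R_{B,k}` is a
bijection of `ℤ^K`. -/
lemma phiR_aux {K : Type*} [DecidableEq K] (k : K) (B : Matrix K K ℤ)
    (hsk : ∀ i, B i k = -B k i) :
    phiR (mutate B k) k ∘ phiR B k = id := by
  funext g i
  simp only [Function.comp_apply, id_eq]
  by_cases hik : i = k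
  · simp [phiR, hik]
  · rcases lt_trichotomy (g k) 0 with h | h | h
    · have h1 : ¬ (0 ≤ g k) := not_le.mpr h
      have h2 : (0:ℤ) ≤ -g k := by omega
      simp [phiR, mutate, hik, h1, h2, hsk i]
      exact fun h' => absurd h' (by omega)
    · simp [phiR, hik, h]
    · have h1 : (0:ℤ) ≤ g k := le_of_lt h
      have h2 : ¬ ((0:ℤ) ≤ -g k) := by omega
      simp [phiR, mutate, hik, h1, h2, hsk i]
      exact fun h' => absurd h' (by omega)

lemma phiR_depends {K : Type*} [DecidableEq K] (k : K) (B C : Matrix K K ℤ)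
    (h1 : ∀ i, B k i = C k i) (h2 : ∀ i, B i k = C i k) :
    phiR B k = phiR C k := by
  funext g i
  simp only [phiR, h1 i, h2 i]

theorem stmt5 {K : Type*} [Fintype K] [DecidableEq K] (k : K)
    (B : Matrix K K ℤ) (hskew : ∀ i j, B j i = -B i j) :
    phiR (mutate B k) k ∘ phiR B k = id ∧
    phiR B k ∘ phiR (mutate B k) k = id ∧
    Function.Bijective (phiR B k) := by
  have hsk : ∀ i, B i k = -B k i := fun i => hskew k i
  have e1 : phiR (mutate B k) k ∘ phiR B k = id := phiR_aux k B hsk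
  have hrow : ∀ i, mutate (mutate B k) k k i = B k i := by
    intro i; simp [mutate]
  have hcol : ∀ i, mutate (mutate B k) k i k = B i k := by
    intro i; simp [mutate]
  have hsk' : ∀ i, (mutate B k) i k = -(mutate B k) k i := by
    intro i; simp only [mutate, or_true, true_or, if_pos, neg_neg]
    rw [hsk i]; ring
  have e2 : phiR B k ∘ phiR (mutate B k) k = id := by
    rw [phiR_depends k B (mutate (mutate B k) k) (fun i => (hrow i).symm)
      (fun i => (hcol i).symm)]
    exact phiR_aux k (mutate B k) hsk'
  refine ⟨e1, e2, ?_⟩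
  exact Function.bijective_iff_has_inverse.mpr
    ⟨phiR (mutate B k) k, congrFun e1, congrFun e2⟩
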